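/- Let h : B'(R) × (−r_j, r_j) → ℝ be integrable, and define the vertical mean (h̄)_j(x') = (1/(2r_j)) ∫_{−r_j}^{r_j} h(x', ω) dω. Then for r_k ≤ r_j, exponents 1 ≤ ℓ, q_h, q_v ≤ ∞, and h with ∂₃h ∈ L^ℓ_v L^{q_h}_h, one has ‖h − (h̄)_j‖_{L^{q_v}_v L^{q_h}_h(B'(R)×(−r_k, r_k))} ≤ C r_k^{1/q_v} r_j^{1 − 1/ℓ} ‖∂₃ h‖_{L^ℓ_v L^{q_h}_h(B'(R)×(−r_j, r_j))}. -/

import Mathlib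

open MeasureTheory Metric ENNReal

noncomputable section

/-- The anisotropic norm `‖g‖_{L^{q_v}_v L^{q_h}_h (B'(R) × (−r, r))}`:
first the `L^{q_h}` norm in the horizontal variables over the disk `B'(R)`,
then the `L^{q_v}` norm in the vertical variable over `(−r, r)`. -/
def aniNorm (g : EuclideanSpace ℝ (Fin 2) × ℝ → ℝ) (R r : ℝ) (qv qh : ℝ≥0∞) : ℝ≥0∞ :=
  eLpNorm (fun x3 =>
      (eLpNorm (fun x' => g (x', x3)) qh
        (volume.restrict (ball (0 : EuclideanSpace ℝ (Fin 2)) R))).toReal)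
    qv (volume.restrict (Set.Ioo (-r) r))

/-- The vertical mean `(h̄)_j(x') = (1/(2 r_j)) ∫_{−r_j}^{r_j} h(x', ω) dω`,
with `r_j = 2^{−j}`. -/
def vmean (h : EuclideanSpace ℝ (Fin 2) × ℝ → ℝ) (j : ℕ)
    (x' : EuclideanSpace ℝ (Fin 2)) : ℝ :=
  (1 / (2 * (2 : ℝ) ^ (-(j : ℝ)))) *
    ∫ ω in Set.Ioo (-((2 : ℝ) ^ (-(j : ℝ)))) ((2 : ℝ) ^ (-(j : ℝ))), h (x', ω)

abbrev E2 := EuclideanSpace ℝ (Fin 2)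
attribute [local instance] Classical.propDecidable

lemma hasDerivAt_slice (h : E2 × ℝ → ℝ) (hh : ContDiff ℝ 1 h) (x1 : E2) (t : ℝ) :
    HasDerivAt (fun s => h (x1, s)) (fderiv ℝ h (x1, t) ((0 : E2), (1 : ℝ))) t := by
  have h1 : HasFDerivAt h (fderiv ℝ h (x1, t)) (x1, t) :=
    (hh.differentiable one_ne_zero (x1, t)).hasFDerivAt
  have h2 : HasDerivAt (fun s : ℝ => ((x1 : E2), s)) ((0 : E2), (1 : ℝ)) t :=
    (hasDerivAt_const t x1).prodMk (hasDerivAt_id t)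
  exact h1.comp_hasDerivAt t h2

lemma cont_d (h : E2 × ℝ → ℝ) (hh : ContDiff ℝ 1 h) :
    Continuous (fun x : E2 × ℝ => deriv (fun t => h (x.1, t)) x.2) := by
  have he : (fun x : E2 × ℝ => deriv (fun t => h (x.1, t)) x.2)
      = fun x => fderiv ℝ h x ((0 : E2), (1 : ℝ)) := by
    funext x
    exact (hasDerivAt_slice h hh x.1 x.2).deriv
  rw [he]
  exact (hh.continuous_fderiv one_ne_zero).clm_apply continuous_const

lemma pointwise_bound (h : E2 × ℝ → ℝ) (hh : ContDiff ℝ 1 h) (j : ℕ) (x1 : E2) {x3 : ℝ}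
    (hx3 : x3 ∈ Set.Ioo (-((2:ℝ) ^ (-(j:ℝ)))) ((2:ℝ) ^ (-(j:ℝ)))) :
    |h (x1, x3) - vmean h j x1| ≤
      ∫ t in Set.Ioo (-((2:ℝ) ^ (-(j:ℝ)))) ((2:ℝ) ^ (-(j:ℝ))), |deriv (fun s => h (x1, s)) t| := by
  set rj : ℝ := (2:ℝ) ^ (-(j:ℝ)) with hrj
  have hrj0 : 0 < rj := Real.rpow_pos_of_pos two_pos _
  set I : Set ℝ := Set.Ioo (-rj) rj with hI
  set φ : ℝ → ℝ := fun s => h (x1, s) with hφ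
  set B : ℝ := ∫ t in I, |deriv φ t| with hB
  have hd1 : Continuous (deriv φ) := by
    have := (cont_d h hh).comp (Continuous.prodMk_right x1)
    exact this
  have hφc : Continuous φ := (hh.continuous).comp (Continuous.prodMk_right x1)
  have hφd : ∀ t : ℝ, DifferentiableAt ℝ φ t := fun t =>
    (hasDerivAt_slice h hh x1 t).differentiableAt
  have hint : IntegrableOn (fun t => |deriv φ t|) I volume :=
    ((hd1.abs).integrableOn_Icc (a := -rj) (b := rj)).mono_set Set.Ioo_subset_Icc_self
  -- step 1
  have step1 : ∀ ω ∈ I, |φ x3 - φ ω| ≤ B := by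
    intro ω hω
    have hftc : ∫ t in ω..x3, deriv φ t = φ x3 - φ ω :=
      intervalIntegral.integral_deriv_eq_sub (fun t _ => hφd t)
        (hd1.intervalIntegrable _ _)
    rw [← hftc]
    calc |∫ t in ω..x3, deriv φ t| ≤ ∫ t in Set.uIoc ω x3, |deriv φ t| := by
          simpa only [Real.norm_eq_abs] using
            intervalIntegral.norm_integral_le_integral_norm_uIoc (a := ω) (b := x3)
              (f := deriv φ) (μ := volume)
      _ ≤ B := by
          apply setIntegral_mono_set hint
          · filter_upwards with t using abs_nonneg _
          · apply HasSubset.Subset.eventuallyLE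
            intro t ht
            rcases ht with ⟨h1, h2⟩
            constructor
            · calc -rj < min ω x3 := lt_min hω.1 hx3.1
                _ < t := h1
            · calc t ≤ max ω x3 := h2
                _ < rj := max_lt hω.2 hx3.2
  -- step 2: rewrite difference as averaged integral
  have hμI : volume I ≠ ⊤ := by
    rw [hI, Real.volume_Ioo]; exact ofReal_ne_top
  have hμIr : (volume I).toReal = 2 * rj := by
    rw [hI, Real.volume_Ioo, ENNReal.toReal_ofReal (by linarith)]
    ring
  have hφint : IntegrableOn φ I volume :=
    (hφc.integrableOn_Icc (a := -rj) (b := rj)).mono_set Set.Ioo_subset_Icc_self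
  have step2 : h (x1, x3) - vmean h j x1 = (1 / (2 * rj)) * ∫ ω in I, (φ x3 - φ ω) := by
    rw [integral_sub (integrableOn_const (C := φ x3) hμI) hφint]
    rw [setIntegral_const, measureReal_def, hμIr]
    unfold vmean
    rw [← hrj, ← hI]
    have : h (x1, x3) = φ x3 := rfl
    rw [this]
    field_simp
    ring
  rw [step2]
  have step3 : |∫ ω in I, (φ x3 - φ ω)| ≤ (volume I).toReal * B := by
    rw [mul_comm, ← Real.norm_eq_abs]
    apply norm_setIntegral_le_of_norm_le_const hμI.lt_top
    · intro ω hω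
      simpa only [Real.norm_eq_abs] using step1 ω hω
  rw [abs_mul, abs_of_nonneg (by positivity : (0:ℝ) ≤ 1 / (2 * rj))]
  calc 1 / (2 * rj) * |∫ ω in I, (φ x3 - φ ω)| ≤ 1 / (2 * rj) * ((2 * rj) * B) := by
        rw [hμIr] at step3
        apply mul_le_mul_of_nonneg_left step3 (by positivity)
    _ = B := by field_simp

lemma le_essSup_ball {g : E2 → ℝ} (hg : Continuous g) {R : ℝ} {x : E2}
    (hx : x ∈ ball (0 : E2) R) :
    (‖g x‖₊ : ℝ≥0∞) ≤ essSup (fun y => (‖g y‖₊ : ℝ≥0∞)) (volume.restrict (ball (0 : E2) R)) := by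
  by_contra hlt
  push_neg at hlt
  obtain ⟨c, hc1, hc2⟩ := exists_between hlt
  have hae := ae_lt_of_essSup_lt hc1
  have hcont : Continuous fun y : E2 => (‖g y‖₊ : ℝ≥0∞) := ENNReal.continuous_coe.comp hg.nnnorm
  set U : Set E2 := {y | c < (‖g y‖₊ : ℝ≥0∞)} ∩ ball (0 : E2) R with hU
  have hUopen : IsOpen U := (isOpen_lt continuous_const hcont).inter isOpen_ball
  have hxU : x ∈ U := ⟨hc2, hx⟩
  have hpos : 0 < volume U := hUopen.measure_pos volume ⟨x, hxU⟩
  have hnull : volume U = 0 := by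
    have h0 : (volume.restrict (ball (0 : E2) R)) {y | c < (‖g y‖₊ : ℝ≥0∞)} = 0 := by
      rw [← nonpos_iff_eq_zero]
      refine le_trans (measure_mono ?_) (le_of_eq (ae_iff.1 hae))
      intro y hy
      simp only [Set.mem_setOf_eq, not_lt] at hy ⊢
      exact le_of_lt hy
    rw [Measure.restrict_apply' measurableSet_ball] at h0
    exact h0
  exact absurd hnull hpos.ne'

lemma minkowski_ball (f : E2 × ℝ → ℝ) (hf : Continuous f) (R r : ℝ)
    (qh : ℝ≥0∞) (hqh : 1 ≤ qh) :
    eLpNorm (fun x' => ∫ t in Set.Ioo (-r) r, |f (x', t)|) qh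
        (volume.restrict (ball (0 : E2) R)) ≤
      ∫⁻ t in Set.Ioo (-r) r,
        eLpNorm (fun x' => f (x', t)) qh (volume.restrict (ball (0 : E2) R)) := by
  set μ := volume.restrict (ball (0 : E2) R) with hμ
  set s : Set ℝ := Set.Ioo (-r) r with hs
  have hsIcc : s ⊆ Set.Icc (-r) r := Set.Ioo_subset_Icc_self
  have hinteg : ∀ x' : E2, IntegrableOn (fun t => |f (x', t)|) s volume := fun x' =>
    (((hf.comp (Continuous.prodMk_right x')).abs).integrableOn_Icc).mono_set hsIcc
  have hg1 : ∀ x' : E2,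
      (‖(∫ t in s, |f (x', t)|)‖₊ : ℝ≥0∞) = ∫⁻ t in s, (‖f (x', t)‖₊ : ℝ≥0∞) := by
    intro x'
    rw [← enorm_eq_nnnorm, Real.enorm_eq_ofReal_abs, abs_of_nonneg (integral_nonneg fun t => abs_nonneg _),
      ofReal_integral_eq_lintegral_ofReal (hinteg x')
        (Filter.Eventually.of_forall fun t => abs_nonneg _)]
    exact lintegral_congr fun t => (Real.enorm_eq_ofReal_abs _).symm
  have hFm : Measurable (fun z : E2 × ℝ => (‖f z‖₊ : ℝ≥0∞)) :=
    (ENNReal.continuous_coe.comp hf.nnnorm).measurable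
  set G : E2 → ℝ≥0∞ := fun x' => ∫⁻ t in s, (‖f (x', t)‖₊ : ℝ≥0∞) with hG
  have hGm : Measurable G := Measurable.lintegral_prod_right' hFm
  obtain ⟨M, hM⟩ := ((isCompact_closedBall (0 : E2) R).prod
    (isCompact_Icc (a := -r) (b := r))).exists_bound_of_continuousOn hf.continuousOn
  have hGball : ∀ x' ∈ ball (0 : E2) R, G x' ≤ ENNReal.ofReal M * volume s := by
    intro x' hx'
    calc G x' ≤ ∫⁻ _ in s, ENNReal.ofReal M := by
          apply setLIntegral_mono measurable_const
          intro t ht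
          rw [← enorm_eq_nnnorm, Real.enorm_eq_ofReal_abs]
          apply ENNReal.ofReal_le_ofReal
          rw [← Real.norm_eq_abs]
          exact hM (x', t) ⟨ball_subset_closedBall hx', hsIcc ht⟩
      _ = ENNReal.ofReal M * volume s := setLIntegral_const s _
  have hvs : volume s ≠ ∞ := by rw [hs, Real.volume_Ioo]; exact ofReal_ne_top
  have hGfin : ∀ x' ∈ ball (0 : E2) R, G x' ≠ ∞ := fun x' hx' =>
    ((hGball x' hx').trans_lt (ENNReal.mul_lt_top ofReal_lt_top hvs.lt_top)).ne
  by_cases hqt : qh = ∞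
  · subst hqt
    rw [eLpNorm_exponent_top]
    have hb : ∀ᵐ x' ∂μ, (‖(∫ t in s, |f (x', t)|)‖₊ : ℝ≥0∞) ≤
        ∫⁻ t in s, eLpNorm (fun x' => f (x', t)) ∞ μ := by
      filter_upwards [ae_restrict_mem measurableSet_ball] with x' hx'
      rw [hg1 x']
      apply lintegral_mono
      intro t
      exact le_essSup_ball (hf.comp (continuous_id.prodMk continuous_const)) hx'
    exact essSup_le_of_ae_le _ hb
  · have hq0 : qh ≠ 0 := (zero_lt_one.trans_le hqh).ne'
    set p := qh.toReal with hp
    have hp1 : 1 ≤ p := by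
      have := ENNReal.toReal_mono hqt hqh
      simpa using this
    have hp0 : 0 < p := zero_lt_one.trans_le hp1
    rw [eLpNorm_eq_lintegral_rpow_enorm_toReal hq0 hqt]
    simp only [enorm_eq_nnnorm]
    have hRHS : (∫⁻ t in s, eLpNorm (fun x' => f (x', t)) qh μ) =
        ∫⁻ t in s, (∫⁻ x', ((‖f (x', t)‖₊ : ℝ≥0∞)) ^ p ∂μ) ^ (1 / p) :=
      lintegral_congr fun t => eLpNorm_eq_lintegral_rpow_enorm_toReal hq0 hqt
    rw [hRHS]
    have hLHS : (∫⁻ x', (‖(∫ t in s, |f (x', t)|)‖₊ : ℝ≥0∞) ^ p ∂μ) =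
        ∫⁻ x', G x' ^ p ∂μ := lintegral_congr fun x' => by rw [hg1 x']
    rw [hLHS]
    -- key inequality
    by_cases hpeq : p = 1
    · have hq1 : qh.toReal = 1 := hpeq
      simp only [hpeq, hq1, ENNReal.rpow_one, one_div, inv_one]
      exact le_of_eq (lintegral_lintegral_swap (μ := μ) (ν := volume.restrict s)
        (f := fun x' t => ((‖f (x', t)‖₊ : ℝ≥0∞))) hFm.aemeasurable)
    · have hp1lt : 1 < p := lt_of_le_of_ne hp1 (Ne.symm hpeq)
      have hpq : p.HolderConjugate p.conjExponent := Real.HolderConjugate.conjExponent hp1lt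
      set q := p.conjExponent with hqdef
      set I := ∫⁻ x', G x' ^ p ∂μ with hI
      have hIfin : I ≠ ∞ := by
        have hb : ∀ᵐ x' ∂μ, G x' ^ p ≤ (ENNReal.ofReal M * volume s) ^ p := by
          filter_upwards [ae_restrict_mem measurableSet_ball] with x' hx'
          exact ENNReal.rpow_le_rpow (hGball x' hx') hp0.le
        have := lintegral_mono_ae hb
        rw [lintegral_const] at this
        refine (this.trans_lt (ENNReal.mul_lt_top ?_ ?_)).ne
        · exact (ENNReal.rpow_ne_top_of_nonneg hp0.le
            (ENNReal.mul_lt_top ofReal_lt_top hvs.lt_top).ne).lt_top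
        · rw [hμ, Measure.restrict_apply_univ]
          exact measure_ball_lt_top
      have hq_pos : 0 < q := hpq.symm.pos
      have hiq : (0:ℝ) ≤ 1/q := le_of_lt (one_div_pos.mpr hq_pos)
      have hip : (0:ℝ) ≤ 1/p := le_of_lt (one_div_pos.mpr hp0)
      by_cases hI0 : I = 0
      · rw [hI0, ENNReal.zero_rpow_of_pos (one_div_pos.mpr hp0)]
        exact zero_le
      · have hGpm : Measurable fun x' => G x' ^ (p - 1) :=
          ENNReal.continuous_rpow_const.measurable.comp hGm
        have hmeas_prod : AEMeasurable
            (Function.uncurry fun x' t => G x' ^ (p - 1) * ((‖f (x', t)‖₊ : ℝ≥0∞)))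
            (μ.prod (volume.restrict s)) :=
          ((hGpm.comp measurable_fst).mul hFm).aemeasurable
        have e1 : I = ∫⁻ t in s, ∫⁻ x', G x' ^ (p - 1) * (‖f (x', t)‖₊ : ℝ≥0∞) ∂μ := by
          rw [← lintegral_lintegral_swap hmeas_prod]
          apply lintegral_congr_ae
          filter_upwards [ae_restrict_mem measurableSet_ball] with x' hx'
          have hGx : G x' ≠ ∞ := hGfin x' hx'
          calc G x' ^ p = G x' ^ (p - 1) * G x' := by
                nth_rewrite 1 [show p = (p - 1) + 1 by ring]
                rw [ENNReal.rpow_add_of_nonneg _ _ (by linarith) zero_le_one,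
                  ENNReal.rpow_one]
            _ = ∫⁻ t in s, G x' ^ (p - 1) * (‖f (x', t)‖₊ : ℝ≥0∞) :=
                (lintegral_const_mul' _ _
                  (ENNReal.rpow_ne_top_of_nonneg (by linarith) hGx)).symm
        have e2 : ∀ t : ℝ, (∫⁻ x', G x' ^ (p - 1) * (‖f (x', t)‖₊ : ℝ≥0∞) ∂μ) ≤
            (∫⁻ x', (‖f (x', t)‖₊ : ℝ≥0∞) ^ p ∂μ) ^ (1 / p) * I ^ (1 / q) := by
          intro t
          have hfmt : Measurable fun x' : E2 => (‖f (x', t)‖₊ : ℝ≥0∞) :=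
            hFm.comp (measurable_id.prodMk measurable_const)
          have hH := ENNReal.lintegral_mul_le_Lp_mul_Lq μ hpq hfmt.aemeasurable
            hGpm.aemeasurable
          have hcomm : (∫⁻ x', G x' ^ (p - 1) * (‖f (x', t)‖₊ : ℝ≥0∞) ∂μ)
              = ∫⁻ x', ((fun x' : E2 => (‖f (x', t)‖₊ : ℝ≥0∞)) *
                  fun x' => G x' ^ (p - 1)) x' ∂μ :=
            lintegral_congr fun x' => by simp [mul_comm]
          rw [hcomm]
          refine hH.trans ?_
          gcongr
          apply le_of_eq
          rw [hI]
          refine lintegral_congr fun x' => ?_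
          rw [← ENNReal.rpow_mul, hpq.sub_one_mul_conj]
        have key2 : I ≤ (∫⁻ t in s, (∫⁻ x', (‖f (x', t)‖₊ : ℝ≥0∞) ^ p ∂μ) ^ (1 / p)) *
            I ^ (1 / q) := by
          calc I = ∫⁻ t in s, ∫⁻ x', G x' ^ (p - 1) * (‖f (x', t)‖₊ : ℝ≥0∞) ∂μ := e1
            _ ≤ ∫⁻ t in s, (∫⁻ x', (‖f (x', t)‖₊ : ℝ≥0∞) ^ p ∂μ) ^ (1 / p) * I ^ (1 / q) :=
                lintegral_mono fun t => e2 t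
            _ = _ := lintegral_mul_const' _ _
                (ENNReal.rpow_ne_top_of_nonneg hiq hIfin)
        have hIq0 : I ^ (1 / q) ≠ 0 :=
          (ENNReal.rpow_pos (pos_iff_ne_zero.mpr hI0) hIfin).ne'
        have hIqt : I ^ (1 / q) ≠ ∞ := ENNReal.rpow_ne_top_of_nonneg hiq hIfin
        have hfact : I ^ (1 / p) * I ^ (1 / q) = I := by
          rw [← ENNReal.rpow_add_of_nonneg _ _ hip hiq,
            show 1 / p + 1 / q = 1 by rw [one_div, one_div]; exact hpq.inv_add_inv_eq_one,
            ENNReal.rpow_one]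
        exact (ENNReal.mul_le_mul_iff_left hIq0 hIqt).mp (hfact.le.trans key2)

lemma essSup_ball_eq_iSup (g : E2 × ℝ → ℝ) (hg : Continuous g) (R : ℝ) (t : ℝ) :
    eLpNormEssSup (fun x' => g (x', t)) (volume.restrict (ball (0 : E2) R)) =
      ⨆ n : ℕ, (if TopologicalSpace.denseSeq E2 n ∈ ball (0 : E2) R then
        ((‖g (TopologicalSpace.denseSeq E2 n, t)‖₊ : ℝ≥0∞)) else 0) := by
  set u := TopologicalSpace.denseSeq E2 with hu
  have hdense : DenseRange u := TopologicalSpace.denseRange_denseSeq E2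
  apply le_antisymm
  · refine essSup_le_of_ae_le _ ?_
    filter_upwards [ae_restrict_mem measurableSet_ball] with x' hx'
    by_contra hlt
    push_neg at hlt
    obtain ⟨c, hc1, hc2⟩ := exists_between hlt
    have hcont : Continuous fun y : E2 => (‖g (y, t)‖₊ : ℝ≥0∞) :=
      ENNReal.continuous_coe.comp (hg.comp (continuous_id.prodMk continuous_const)).nnnorm
    have hUopen : IsOpen ({y : E2 | c < (‖g (y, t)‖₊ : ℝ≥0∞)} ∩ ball (0 : E2) R) :=
      (isOpen_lt continuous_const hcont).inter isOpen_ball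
    obtain ⟨n, hn⟩ := hdense.exists_mem_open hUopen ⟨x', hc2, hx'⟩
    have : (if u n ∈ ball (0 : E2) R then ((‖g (u n, t)‖₊ : ℝ≥0∞)) else 0) ≤ c :=
      le_trans (le_iSup (fun m => if u m ∈ ball (0 : E2) R then
        ((‖g (u m, t)‖₊ : ℝ≥0∞)) else 0) n) hc1.le
    rw [if_pos hn.2] at this
    exact absurd hn.1 (not_lt.mpr this)
  · apply iSup_le
    intro n
    split_ifs with hn
    · exact le_essSup_ball (hg.comp (continuous_id.prodMk continuous_const)) hn
    · exact zero_le

lemma measurable_S (f : E2 × ℝ → ℝ) (hf : Continuous f) (R : ℝ) (qh : ℝ≥0∞) :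
    Measurable fun t => eLpNorm (fun x' => f (x', t)) qh (volume.restrict (ball (0 : E2) R)) := by
  by_cases hq0 : qh = 0
  · simp [hq0]
  by_cases hqt : qh = ∞
  · subst hqt
    have he : (fun t => eLpNorm (fun x' => f (x', t)) ∞ (volume.restrict (ball (0 : E2) R)))
        = fun t => ⨆ n : ℕ, (if TopologicalSpace.denseSeq E2 n ∈ ball (0 : E2) R then
            ((‖f (TopologicalSpace.denseSeq E2 n, t)‖₊ : ℝ≥0∞)) else 0) := by
      funext t
      rw [eLpNorm_exponent_top]
      exact essSup_ball_eq_iSup f hf R t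
    rw [he]
    apply Measurable.iSup
    intro n
    split_ifs with hn
    · exact (ENNReal.continuous_coe.comp
        (hf.comp (continuous_const.prodMk continuous_id)).nnnorm).measurable
    · exact measurable_const
  · have he : (fun t => eLpNorm (fun x' => f (x', t)) qh (volume.restrict (ball (0 : E2) R)))
        = fun t => (∫⁻ x', ((‖f (x', t)‖₊ : ℝ≥0∞)) ^ qh.toReal
            ∂(volume.restrict (ball (0 : E2) R))) ^ (1 / qh.toReal) := by
      funext t
      exact eLpNorm_eq_lintegral_rpow_enorm_toReal hq0 hqt
    rw [he]
    have hm : Measurable fun t => ∫⁻ x', ((‖f (x', t)‖₊ : ℝ≥0∞)) ^ qh.toReal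
        ∂(volume.restrict (ball (0 : E2) R)) :=
      Measurable.lintegral_prod_left'
        (ENNReal.continuous_rpow_const.measurable.comp
          (ENNReal.continuous_coe.comp hf.nnnorm).measurable)
    exact ENNReal.continuous_rpow_const.measurable.comp hm

/-- Poincaré inequality (Lemma A.3, first part): for `r_k ≤ r_j`,
`‖h − (h̄)_j‖_{L^{q_v}_v L^{q_h}_h(B'(R)×(−r_k,r_k))}
  ≤ C r_k^{1/q_v} r_j^{1−1/ℓ} ‖∂₃h‖_{L^ℓ_v L^{q_h}_h(B'(R)×(−r_j,r_j))}`,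
with `C` independent of `j, k, R`. -/
theorem stmt1 : ∃ C : ℝ≥0∞, 0 < C ∧ C ≠ ⊤ ∧
    ∀ (R : ℝ) (j k : ℕ) (h : EuclideanSpace ℝ (Fin 2) × ℝ → ℝ) (ℓ qh qv : ℝ≥0∞),
      0 < R → j ≤ k → 1 ≤ ℓ → 1 ≤ qh → 1 ≤ qv → ContDiff ℝ 1 h →
      aniNorm (fun x => h x - vmean h j x.1) R ((2 : ℝ) ^ (-(k : ℝ))) qv qh ≤
        C * ENNReal.ofReal (((2 : ℝ) ^ (-(k : ℝ))) ^ (1 / qv).toReal *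
            ((2 : ℝ) ^ (-(j : ℝ))) ^ (1 - (1 / ℓ).toReal)) *
          aniNorm (fun x => deriv (fun t => h (x.1, t)) x.2) R
            ((2 : ℝ) ^ (-(j : ℝ))) ℓ qh := by
  refine ⟨4, by norm_num, by norm_num, ?_⟩
  intro R j k h ℓ qh qv hR hjk hℓ hqh hqv hh
  set rj : ℝ := (2:ℝ) ^ (-(j:ℝ)) with hrjdef
  set rk : ℝ := (2:ℝ) ^ (-(k:ℝ)) with hrkdef
  have hrj0 : 0 < rj := Real.rpow_pos_of_pos two_pos _
  have hrk0 : 0 < rk := Real.rpow_pos_of_pos two_pos _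
  have hrkj : rk ≤ rj := Real.rpow_le_rpow_of_exponent_le one_le_two
    (neg_le_neg (Nat.cast_le.mpr hjk))
  set μ := volume.restrict (ball (0 : E2) R) with hμ
  set d : E2 × ℝ → ℝ := fun x => deriv (fun t => h (x.1, t)) x.2 with hd
  have hdc : Continuous d := cont_d h hh
  set S : ℝ → ℝ≥0∞ := fun t => eLpNorm (fun x' => d (x', t)) qh μ with hS
  have hSm : Measurable S := measurable_S d hdc R qh
  have hSfin : ∀ t : ℝ, S t ≠ ∞ := by
    intro t
    obtain ⟨M, hM⟩ := (isCompact_closedBall (0 : E2) R).exists_bound_of_continuousOn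
      ((hdc.comp (continuous_id.prodMk (continuous_const (y := t)))).continuousOn)
    have hb : ∀ᵐ x' ∂μ, ‖d (x', t)‖ ≤ M := by
      filter_upwards [ae_restrict_mem measurableSet_ball] with x' hx'
      exact hM x' (ball_subset_closedBall hx')
    refine ((eLpNorm_le_of_ae_bound hb).trans_lt ?_).ne
    apply ENNReal.mul_lt_top
    · refine (ENNReal.rpow_ne_top_of_nonneg (inv_nonneg.mpr ENNReal.toReal_nonneg) ?_).lt_top
      rw [hμ, Measure.restrict_apply_univ]
      exact measure_ball_lt_top.ne
    · exact ofReal_lt_top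
  set N := eLpNorm (fun t => (S t).toReal) ℓ (volume.restrict (Set.Ioo (-rj) rj)) with hNdef
  have hb0 : 0 ≤ 1 - (1/ℓ).toReal := by
    have h1 : (1/ℓ) ≤ 1 := by
      rw [one_div]
      exact ENNReal.inv_le_one.mpr hℓ
    have := ENNReal.toReal_mono ENNReal.one_ne_top h1
    simp only [ENNReal.toReal_one] at this
    linarith
  -- Step B : Hölder in the vertical variable
  have hlin : (∫⁻ t in Set.Ioo (-rj) rj, S t) ≤
      ENNReal.ofReal (2 * rj) ^ (1 - (1/ℓ).toReal) * N := by
    have h1 : (∫⁻ t in Set.Ioo (-rj) rj, S t)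
        = eLpNorm (fun t => (S t).toReal) 1 (volume.restrict (Set.Ioo (-rj) rj)) := by
      rw [eLpNorm_one_eq_lintegral_enorm]
      refine (lintegral_congr fun t => ?_).symm
      rw [Real.enorm_eq_ofReal_abs, abs_of_nonneg ENNReal.toReal_nonneg,
        ENNReal.ofReal_toReal (hSfin t)]
    rw [h1]
    have h2 := eLpNorm_le_eLpNorm_mul_rpow_measure_univ (p := 1) (q := ℓ)
      (μ := volume.restrict (Set.Ioo (-rj) rj)) hℓ
      ((ENNReal.measurable_toReal.comp hSm).aestronglyMeasurable)
    refine h2.trans (le_of_eq ?_)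
    rw [Measure.restrict_apply_univ, Real.volume_Ioo, mul_comm]
    have hexp : 1 / (1:ℝ≥0∞).toReal - 1 / ℓ.toReal = 1 - (1/ℓ).toReal := by
      rw [ENNReal.toReal_div, ENNReal.toReal_one]
      norm_num
    rw [hexp]
    congr 2
    ring
  -- Step C : per-slice estimate
  have hstep : ∀ x3 ∈ Set.Ioo (-rk) rk,
      eLpNorm (fun x' => h (x', x3) - vmean h j x') qh μ ≤
        ENNReal.ofReal (2 * rj) ^ (1 - (1/ℓ).toReal) * N := by
    intro x3 hx3
    have hx3' : x3 ∈ Set.Ioo (-rj) rj :=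
      ⟨lt_of_le_of_lt (neg_le_neg hrkj) hx3.1, lt_of_lt_of_le hx3.2 hrkj⟩
    calc eLpNorm (fun x' => h (x', x3) - vmean h j x') qh μ
        ≤ eLpNorm (fun x' => ∫ t in Set.Ioo (-rj) rj, |d (x', t)|) qh μ := by
          apply eLpNorm_mono
          intro x'
          rw [Real.norm_eq_abs, Real.norm_eq_abs,
            abs_of_nonneg (integral_nonneg fun t => abs_nonneg _)]
          exact pointwise_bound h hh j x' hx3'
      _ ≤ ∫⁻ t in Set.Ioo (-rj) rj, S t := minkowski_ball d hdc R rj qh hqh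
      _ ≤ _ := hlin
  have hNrfl : aniNorm (fun x => deriv (fun t => h (x.1, t)) x.2) R rj ℓ qh = N := rfl
  rw [hNrfl]
  by_cases hNtop : N = ∞
  · have hpos : (0:ℝ) < rk ^ (1/qv).toReal * rj ^ (1 - (1/ℓ).toReal) := by
      have := Real.rpow_pos_of_pos hrk0 ((1/qv).toReal)
      have := Real.rpow_pos_of_pos hrj0 (1 - (1/ℓ).toReal)
      positivity
    have : (4 : ℝ≥0∞) * ENNReal.ofReal (rk ^ (1/qv).toReal * rj ^ (1 - (1/ℓ).toReal)) * N
        = ∞ := by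
      rw [hNtop, ENNReal.mul_top]
      exact mul_ne_zero (by norm_num) (ENNReal.ofReal_pos.mpr hpos).ne'
    rw [this]
    exact le_top
  · set Mb := ENNReal.ofReal (2 * rj) ^ (1 - (1/ℓ).toReal) * N with hMbdef
    have hMb : Mb ≠ ∞ :=
      ENNReal.mul_ne_top (ENNReal.rpow_ne_top_of_nonneg hb0 ofReal_ne_top) hNtop
    have houter : aniNorm (fun x => h x - vmean h j x.1) R rk qv qh ≤
        (ENNReal.ofReal (2 * rk)) ^ qv.toReal⁻¹ * Mb := by
      have hbd : ∀ᵐ x3 ∂(volume.restrict (Set.Ioo (-rk) rk)),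
          ‖(eLpNorm (fun x' => h (x', x3) - vmean h j x') qh μ).toReal‖ ≤ Mb.toReal := by
        filter_upwards [ae_restrict_mem measurableSet_Ioo] with x3 hx3
        rw [Real.norm_eq_abs, abs_of_nonneg ENNReal.toReal_nonneg]
        exact ENNReal.toReal_mono hMb (hstep x3 hx3)
      have hle := eLpNorm_le_of_ae_bound (p := qv) hbd
      refine le_trans hle (le_of_eq ?_)
      rw [Measure.restrict_apply_univ, Real.volume_Ioo, ENNReal.ofReal_toReal hMb]
      congr 2
      ring
    refine houter.trans ?_
    -- final arithmetic
    have hqeq : (1/qv).toReal = qv.toReal⁻¹ := by rw [one_div, ENNReal.toReal_inv]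
    have ha0 : (0:ℝ) ≤ qv.toReal⁻¹ := inv_nonneg.mpr ENNReal.toReal_nonneg
    have ha1 : qv.toReal⁻¹ ≤ 1 := by
      rcases eq_or_ne qv ∞ with hq | hq
      · simp [hq]
      · have h1 : (1:ℝ) ≤ qv.toReal := by
          have := ENNReal.toReal_mono hq hqv
          simpa using this
        calc qv.toReal⁻¹ ≤ 1⁻¹ := by
              apply inv_anti₀ one_pos h1
          _ = 1 := by norm_num
    have hb1 : 1 - (1/ℓ).toReal ≤ 1 := by
      have : 0 ≤ (1/ℓ).toReal := ENNReal.toReal_nonneg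
      linarith
    have hkey : ∀ (x : ℝ), 0 < x → ∀ (e : ℝ), 0 ≤ e → e ≤ 1 →
        ENNReal.ofReal (2 * x) ^ e ≤ 2 * ENNReal.ofReal (x ^ e) := by
      intro x hx e he0 he1
      rw [ENNReal.ofReal_rpow_of_pos (by linarith)]
      have h2 : (2 * x) ^ e ≤ 2 * x ^ e := by
        rw [Real.mul_rpow (by norm_num) hx.le]
        have : (2:ℝ) ^ e ≤ 2 := by
          calc (2:ℝ) ^ e ≤ (2:ℝ) ^ (1:ℝ) :=
                Real.rpow_le_rpow_of_exponent_le one_le_two he1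
            _ = 2 := Real.rpow_one 2
        have hxe : (0:ℝ) ≤ x ^ e := Real.rpow_nonneg hx.le e
        nlinarith
      calc ENNReal.ofReal ((2 * x) ^ e) ≤ ENNReal.ofReal (2 * x ^ e) :=
            ENNReal.ofReal_le_ofReal h2
        _ = 2 * ENNReal.ofReal (x ^ e) := by
            rw [ENNReal.ofReal_mul (by norm_num)]
            norm_num
    rw [hqeq, hMbdef]
    calc (ENNReal.ofReal (2 * rk)) ^ qv.toReal⁻¹ *
          (ENNReal.ofReal (2 * rj) ^ (1 - (1/ℓ).toReal) * N)
        ≤ (2 * ENNReal.ofReal (rk ^ qv.toReal⁻¹)) *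
          ((2 * ENNReal.ofReal (rj ^ (1 - (1/ℓ).toReal))) * N) := by
          exact mul_le_mul' (hkey rk hrk0 _ ha0 ha1)
            (mul_le_mul' (hkey rj hrj0 _ hb0 hb1) le_rfl)
      _ = 4 * (ENNReal.ofReal (rk ^ qv.toReal⁻¹) *
            ENNReal.ofReal (rj ^ (1 - (1/ℓ).toReal))) * N := by ring
      _ = 4 * ENNReal.ofReal (rk ^ qv.toReal⁻¹ * rj ^ (1 - (1/ℓ).toReal)) * N := by
          rw [← ENNReal.ofReal_mul (Real.rpow_nonneg hrk0.le _)]
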